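/- Fix an integer γ ≥ 1 and a real number h. Let B(h) be the γ×γ matrix with entries b_{αβ}(h) = h^{2γ−α−β−1}/(2γ−α−β−1)! for 0 ≤ α, β ≤ γ−1, and let C(h) be the γ×γ matrix with entries c_{αβ}(h) = h^{2γ−α−β−1}/((2γ−α−β−1)·(γ−α−1)!·(γ−β−1)!). Then det B(h) = (−1)^{γ(γ−1)/2} · det C(h); equivalently, det B(h) = (−1)^{γ(γ−1)/2} · h^{γ²} · Π_{α=0}^{γ−1} (α! / (γ+α)!). In particular B(h) is invertible for every h ≠ 0. -/

import Mathlib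

open Matrix Finset Nat

/-- The upper triangular matrix `A(h)` with entries `h^(β-α)/(β-α)!` for `α ≤ β`. -/
noncomputable def matA (γ : ℕ) (h : ℝ) : Matrix (Fin γ) (Fin γ) ℝ :=
  fun α β =>
    if (α : ℕ) ≤ (β : ℕ) then h ^ ((β : ℕ) - (α : ℕ)) / (((β : ℕ) - (α : ℕ)).factorial : ℝ)
    else 0

/-- The matrix `B(h)` with entries `h^(2γ-α-β-1)/(2γ-α-β-1)!`. -/
noncomputable def matB (γ : ℕ) (h : ℝ) : Matrix (Fin γ) (Fin γ) ℝ :=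
  fun α β =>
    h ^ (2 * γ - (α : ℕ) - (β : ℕ) - 1) / ((2 * γ - (α : ℕ) - (β : ℕ) - 1).factorial : ℝ)

/-- The matrix `C(h)` with entries `h^(2γ-α-β-1)/((2γ-α-β-1)·(γ-α-1)!·(γ-β-1)!)`. -/
noncomputable def matC (γ : ℕ) (h : ℝ) : Matrix (Fin γ) (Fin γ) ℝ :=
  fun α β =>
    h ^ (2 * γ - (α : ℕ) - (β : ℕ) - 1) /
      (((2 * γ - (α : ℕ) - (β : ℕ) - 1) * (γ - (α : ℕ) - 1).factorial *
          (γ - (β : ℕ) - 1).factorial : ℕ) : ℝ)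

/-- The diagonal matrix `D` with entries `(-1)^(γ-α-1)`. -/
noncomputable def matD (γ : ℕ) : Matrix (Fin γ) (Fin γ) ℝ :=
  Matrix.diagonal fun α : Fin γ => (-1 : ℝ) ^ (γ - (α : ℕ) - 1)

/-- The lower triangular matrix `L(h)` from the LU decomposition of `C(h)`. -/
noncomputable def matL (γ : ℕ) (h : ℝ) : Matrix (Fin γ) (Fin γ) ℝ :=
  fun α β =>
    if (β : ℕ) ≤ (α : ℕ) then
      h ^ ((β : ℤ) - (α : ℤ)) *
        (((α : ℕ).factorial * (2 * γ - (β : ℕ) - 1).factorial * (γ - (β : ℕ) - 1).factorial *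
            (2 * γ - (α : ℕ) - (β : ℕ) - 2).factorial : ℕ) : ℝ) /
        (((β : ℕ).factorial * ((α : ℕ) - (β : ℕ)).factorial * (2 * γ - (α : ℕ) - 1).factorial *
            (γ - (α : ℕ) - 1).factorial * (2 * γ - 2 * (β : ℕ) - 2).factorial : ℕ) : ℝ)
    else 0

/-- The upper triangular matrix `U(h)` from the LU decomposition of `C(h)`. -/
noncomputable def matU (γ : ℕ) (h : ℝ) : Matrix (Fin γ) (Fin γ) ℝ :=
  fun α β =>
    if (α : ℕ) ≤ (β : ℕ) then
      h ^ (2 * γ - (α : ℕ) - (β : ℕ) - 1) *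
        (((α : ℕ).factorial * (β : ℕ).factorial * (2 * γ - 2 * (α : ℕ) - 1).factorial *
            (2 * γ - (α : ℕ) - (β : ℕ) - 2).factorial : ℕ) : ℝ) /
        ((((β : ℕ) - (α : ℕ)).factorial * (2 * γ - (α : ℕ) - 1).factorial *
            (2 * γ - (β : ℕ) - 1).factorial * (γ - (α : ℕ) - 1).factorial *
            (γ - (β : ℕ) - 1).factorial : ℕ) : ℝ)
    else 0

/-- The diagonal matrix `D̂(h)` of diagonal entries of `U(h)`. -/
noncomputable def matDhat (γ : ℕ) (h : ℝ) : Matrix (Fin γ) (Fin γ) ℝ :=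
  Matrix.diagonal fun α : Fin γ =>
    h ^ (2 * γ - 2 * (α : ℕ) - 1) *
      (((α : ℕ).factorial ^ 2 * (2 * γ - 2 * (α : ℕ) - 2).factorial *
          (2 * γ - 2 * (α : ℕ) - 1).factorial : ℕ) : ℝ) /
      ((((γ - (α : ℕ) - 1).factorial) ^ 2 * ((2 * γ - (α : ℕ) - 1).factorial) ^ 2 : ℕ) : ℝ)

lemma fact_ne (n : ℕ) : ((n.factorial : ℝ)) ≠ 0 :=
  Nat.cast_ne_zero.mpr n.factorial_ne_zero

lemma beta_sum : ∀ n m : ℕ,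
    ∑ j ∈ Finset.range (n+1),
      (-1:ℝ)^j / (j.factorial * (n-j).factorial * ((j:ℝ)+m+1)) =
    (m.factorial : ℝ) / ((n+m+1).factorial : ℝ) := by
  intro n
  induction n with
  | zero =>
      intro m
      simp only [Finset.sum_range_one, Nat.zero_add, pow_zero, Nat.factorial_zero,
        Nat.sub_zero, Nat.cast_zero, Nat.cast_one]
      rw [Nat.factorial_succ]
      have h1 := fact_ne m
      have h2 : ((m:ℝ)+1) ≠ 0 := by positivity
      push_cast
      field_simp
      ring
  | succ n ih =>
      intro m
      rw [Finset.sum_range_succ]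
      have hsplit : ∀ j ∈ Finset.range (n+1),
          (-1:ℝ)^j / (j.factorial * ((n+1)-j).factorial * ((j:ℝ)+m+1)) =
          (1/((n:ℝ)+m+2)) * ((-1:ℝ)^j / (j.factorial * (n-j).factorial * (((n:ℝ)+1-j)))) +
          (1/((n:ℝ)+m+2)) * ((-1:ℝ)^j / (j.factorial * (n-j).factorial * ((j:ℝ)+m+1))) := by
        intro j hj
        rw [Finset.mem_range] at hj
        obtain ⟨t, ht⟩ : ∃ t, n = j + t := ⟨n - j, by omega⟩
        subst ht
        rw [show j + t + 1 - j = t + 1 from by omega, show j + t - j = t from by omega,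
          Nat.factorial_succ]
        have h1 := fact_ne j; have h2 := fact_ne t
        have h3 : ((j:ℝ)+m+1) ≠ 0 := by positivity
        have h4 : ((j:ℝ)+t+m+2) ≠ 0 := by positivity
        have h5 : ((t:ℝ)+1) ≠ 0 := by positivity
        have h6 : ((j:ℝ)+t+1-j) = (t:ℝ)+1 := by ring
        push_cast
        rw [h6]
        field_simp
        ring
      rw [Finset.sum_congr rfl hsplit, Finset.sum_add_distrib, ← Finset.mul_sum, ← Finset.mul_sum,
        ih m]
      have hrefl : ∑ j ∈ Finset.range (n+1),
          (-1:ℝ)^j / (j.factorial * (n-j).factorial * ((n:ℝ)+1-j)) =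
          (-1:ℝ)^n * (((0:ℕ).factorial : ℝ) / ((n+0+1).factorial : ℝ)) := by
        rw [← ih 0]
        rw [← Finset.sum_range_reflect
          (fun j => (-1:ℝ)^j / (j.factorial * (n-j).factorial * ((n:ℝ)+1-j))) (n+1)]
        rw [Finset.mul_sum]
        refine Finset.sum_congr rfl ?_
        intro j hj
        rw [Finset.mem_range] at hj
        obtain ⟨t, ht⟩ : ∃ t, n = j + t := ⟨n - j, by omega⟩
        subst ht
        rw [show j + t + 1 - 1 - j = t from by omega, show j + t - t = j from by omega,
          show j + t - j = t from by omega]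
        have hs : ((-1:ℝ))^(j+t) * (-1)^j = (-1)^t := by
          rw [← pow_add, show j+t+j = 2*j+t from by ring, pow_add, pow_mul]
          norm_num
        rw [← mul_div_assoc, hs]
        have h4 : ((j:ℝ)+(t:ℝ)+1-(t:ℝ)) = (j:ℝ)+1 := by ring
        push_cast
        rw [h4]
        ring_nf
      rw [hrefl]
      rw [show n + 1 - (n+1) = 0 from by omega]
      have e1 : (((n+1)+m+1).factorial : ℝ) = ((n:ℝ)+m+2) * ((n+m+1).factorial : ℝ) := by
        rw [show (n+1)+m+1 = (n+m+1)+1 from by omega, Nat.factorial_succ]; push_cast; ring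
      have e2 : (((n+1)).factorial : ℝ) = ((n:ℝ)+1) * (n.factorial : ℝ) := by
        rw [Nat.factorial_succ]; push_cast; ring
      have e3 : ((n+0+1).factorial : ℝ) = ((n:ℝ)+1) * (n.factorial : ℝ) := by
        rw [show n+0+1 = n+1 from by omega, Nat.factorial_succ]; push_cast; ring
      rw [e1, e2, pow_succ, Nat.factorial_zero]
      have h1 := fact_ne m; have h2 := fact_ne (n+m+1); have h3 := fact_ne n
      have h4 : ((n:ℝ)+m+2) ≠ 0 := by positivity
      have h5 : ((n:ℝ)+1) ≠ 0 := by positivity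
      have h6 : ((n:ℝ)+1+m+1) ≠ 0 := by push_cast; positivity
      push_cast
      field_simp
      ring

lemma tele_sum (a b c : ℕ) (hab : a ≤ b) :
    ∑ k ∈ Finset.range (a+1),
      ((a+b+c+1-2*k : ℕ) : ℝ) * ((b+c-k).factorial : ℝ) * ((a+c-k).factorial : ℝ) /
        (((a-k).factorial : ℝ) * ((b-k).factorial : ℝ)) =
    ((b+c+1).factorial : ℝ) * ((a+c+1).factorial : ℝ) /
      (((c:ℝ)+1) * (a.factorial : ℝ) * (b.factorial : ℝ)) := by
  set f : ℕ → ℝ := fun k =>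
    ((b+c+1-k).factorial : ℝ) * ((a+c+1-k).factorial : ℝ) /
      (((c:ℝ)+1) * ((a-k).factorial : ℝ) * ((b-k).factorial : ℝ)) with hf
  have hstep : ∀ k ∈ Finset.range a,
      ((a+b+c+1-2*k : ℕ) : ℝ) * ((b+c-k).factorial : ℝ) * ((a+c-k).factorial : ℝ) /
        (((a-k).factorial : ℝ) * ((b-k).factorial : ℝ)) = f k - f (k+1) := by
    intro k hk
    rw [Finset.mem_range] at hk
    obtain ⟨p, hp⟩ : ∃ p, a = k + p + 1 := ⟨a - k - 1, by omega⟩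
    obtain ⟨q, hq⟩ : ∃ q, b = k + q + 1 := ⟨b - k - 1, by omega⟩
    simp only [hf]
    rw [show a+b+c+1-2*k = p+q+c+3 from by omega,
      show b+c-k = q+c+1 from by omega, show a+c-k = p+c+1 from by omega,
      show a-k = p+1 from by omega, show b-k = q+1 from by omega,
      show b+c+1-k = q+c+2 from by omega, show a+c+1-k = p+c+2 from by omega,
      show b+c+1-(k+1) = q+c+1 from by omega, show a+c+1-(k+1) = p+c+1 from by omega,
      show a-(k+1) = p from by omega, show b-(k+1) = q from by omega]
    rw [show p+c+2 = (p+c+1)+1 from by omega, show q+c+2 = (q+c+1)+1 from by omega,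
      Nat.factorial_succ (p+c+1), Nat.factorial_succ (q+c+1),
      Nat.factorial_succ p, Nat.factorial_succ q]
    have h1 := fact_ne p; have h2 := fact_ne q
    have h3 := fact_ne (p+c+1); have h4 := fact_ne (q+c+1)
    have h5 : ((p:ℝ)+1) ≠ 0 := by positivity
    have h6 : ((q:ℝ)+1) ≠ 0 := by positivity
    have h7 : ((c:ℝ)+1) ≠ 0 := by positivity
    push_cast
    field_simp
    ring
  rw [Finset.sum_range_succ, Finset.sum_congr rfl hstep, Finset.sum_range_sub' f a]
  obtain ⟨r, hr⟩ : ∃ r, b = a + r := ⟨b - a, by omega⟩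
  subst hr
  simp only [hf]
  rw [show a+(a+r)+c+1-2*a = r+c+1 from by omega, show a+r+c-a = r+c from by omega,
    show a+c-a = c from by omega, Nat.sub_self, show a+r-a = r from by omega,
    show a+r+c+1-a = r+c+1 from by omega, show a+c+1-a = c+1 from by omega,
    Nat.sub_zero, Nat.sub_zero, Nat.sub_zero, Nat.factorial_zero,
    Nat.factorial_succ (r+c), Nat.factorial_succ c]
  have h1 := fact_ne r; have h2 := fact_ne c; have h3 := fact_ne (r+c)
  have h4 := fact_ne a; have h5 := fact_ne (a+r)
  have h6 : ((c:ℝ)+1) ≠ 0 := by positivity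
  have h7 := fact_ne (a+r+c+1); have h8 := fact_ne (a+c+1)
  push_cast
  field_simp
  simp only [Nat.sub_zero]
  ring

lemma tele_sum' (a b c : ℕ) :
    ∑ k ∈ Finset.range (min a b + 1),
      ((a+b+c+1-2*k : ℕ) : ℝ) * ((b+c-k).factorial : ℝ) * ((a+c-k).factorial : ℝ) /
        (((a-k).factorial : ℝ) * ((b-k).factorial : ℝ)) =
    ((b+c+1).factorial : ℝ) * ((a+c+1).factorial : ℝ) /
      (((c:ℝ)+1) * (a.factorial : ℝ) * (b.factorial : ℝ)) := by
  rcases le_total a b with hab | hab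
  · rw [min_eq_left hab]; exact tele_sum a b c hab
  · rw [min_eq_right hab]
    simp only [show ∀ k : ℕ, a+b+c+1-2*k = b+a+c+1-2*k from fun k => by omega]
    calc ∑ k ∈ Finset.range (b+1),
        ((b+a+c+1-2*k : ℕ) : ℝ) * ((b+c-k).factorial : ℝ) * ((a+c-k).factorial : ℝ) /
          (((a-k).factorial : ℝ) * ((b-k).factorial : ℝ))
        = ∑ k ∈ Finset.range (b+1),
        ((b+a+c+1-2*k : ℕ) : ℝ) * ((a+c-k).factorial : ℝ) * ((b+c-k).factorial : ℝ) /
          (((b-k).factorial : ℝ) * ((a-k).factorial : ℝ)) := by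
          refine Finset.sum_congr rfl fun k _ => by ring
      _ = ((a+c+1).factorial : ℝ) * ((b+c+1).factorial : ℝ) /
          (((c:ℝ)+1) * (b.factorial : ℝ) * (a.factorial : ℝ)) := tele_sum b a c hab
      _ = _ := by ring

lemma LU (γ : ℕ) (h : ℝ) (hh : h ≠ 0) : matL γ h * matU γ h = matC γ h := by
  ext α β
  rw [Matrix.mul_apply]
  simp only [matL, matU]
  have hα : (α:ℕ) < γ := α.isLt
  have hβ : (β:ℕ) < γ := β.isLt
  set F : ℕ → ℝ := fun k =>
    (if k ≤ (α:ℕ) then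
      h ^ ((k : ℤ) - ((α:ℕ) : ℤ)) *
        (((α:ℕ).factorial * (2 * γ - k - 1).factorial * (γ - k - 1).factorial *
            (2 * γ - (α:ℕ) - k - 2).factorial : ℕ) : ℝ) /
        ((k.factorial * ((α:ℕ) - k).factorial * (2 * γ - (α:ℕ) - 1).factorial *
            (γ - (α:ℕ) - 1).factorial * (2 * γ - 2 * k - 2).factorial : ℕ) : ℝ)
    else 0) *
    (if k ≤ (β:ℕ) then
      h ^ (2 * γ - k - (β:ℕ) - 1) *
        ((k.factorial * (β:ℕ).factorial * (2 * γ - 2 * k - 1).factorial *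
            (2 * γ - k - (β:ℕ) - 2).factorial : ℕ) : ℝ) /
        ((((β:ℕ) - k).factorial * (2 * γ - k - 1).factorial *
            (2 * γ - (β:ℕ) - 1).factorial * (γ - k - 1).factorial *
            (γ - (β:ℕ) - 1).factorial : ℕ) : ℝ)
    else 0) with hF
  rw [Fin.sum_univ_eq_sum_range F γ]
  have hsub : Finset.range (min (α:ℕ) (β:ℕ) + 1) ⊆ Finset.range γ := by
    intro x hx; rw [Finset.mem_range] at *; omega
  have hzero : ∀ x ∈ Finset.range γ, x ∉ Finset.range (min (α:ℕ) (β:ℕ) + 1) → F x = 0 := by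
    intro x _ hx
    rw [Finset.mem_range] at hx
    simp only [hF]
    rcases Nat.lt_or_ge (α:ℕ) x with h' | h'
    · rw [if_neg (by omega)]; simp
    · rw [if_neg (show ¬ x ≤ (β:ℕ) from by omega)]; simp
  rw [← Finset.sum_subset hsub hzero]
  set c : ℕ := 2 * γ - 2 - (α:ℕ) - (β:ℕ) with hc
  have hT := tele_sum' (α:ℕ) (β:ℕ) c
  simp only [show ∀ k : ℕ, (α:ℕ)+(β:ℕ)+c+1-2*k = 2*γ-2*k-1 from fun k => by omega,
      show ∀ k : ℕ, (β:ℕ)+c-k = 2*γ-(α:ℕ)-k-2 from fun k => by omega,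
      show ∀ k : ℕ, (α:ℕ)+c-k = 2*γ-k-(β:ℕ)-2 from fun k => by omega,
      show (β:ℕ)+c+1 = 2*γ-(α:ℕ)-1 from by omega,
      show (α:ℕ)+c+1 = 2*γ-(β:ℕ)-1 from by omega] at hT
  have hcongr : ∀ k ∈ Finset.range (min (α:ℕ) (β:ℕ) + 1),
      F k = (h ^ (2*γ-(α:ℕ)-(β:ℕ)-1) *
        (((α:ℕ).factorial : ℝ) * ((β:ℕ).factorial : ℝ) /
          (((2*γ-(α:ℕ)-1).factorial : ℝ) * ((2*γ-(β:ℕ)-1).factorial : ℝ) *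
           ((γ-(α:ℕ)-1).factorial : ℝ) * ((γ-(β:ℕ)-1).factorial : ℝ)))) *
      (((2*γ-2*k-1 : ℕ) : ℝ) * ((2*γ-(α:ℕ)-k-2).factorial : ℝ) * ((2*γ-k-(β:ℕ)-2).factorial : ℝ) /
        ((((α:ℕ)-k).factorial : ℝ) * (((β:ℕ)-k).factorial : ℝ))) := by
    intro k hk
    rw [Finset.mem_range] at hk
    have hkα : k ≤ (α:ℕ) := by omega
    have hkβ : k ≤ (β:ℕ) := by omega
    simp only [hF]
    rw [if_pos hkα, if_pos hkβ]
    have hz : h ^ ((k : ℤ) - ((α:ℕ) : ℤ)) = (h ^ ((α:ℕ) - k))⁻¹ := by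
      rw [← zpow_natCast h ((α:ℕ) - k), ← _root_.zpow_neg]
      congr 1
      omega
    have hsp : h ^ (2*γ - k - (β:ℕ) - 1) = h ^ ((α:ℕ) - k) * h ^ (2*γ - (α:ℕ) - (β:ℕ) - 1) := by
      rw [← pow_add]
      congr 1
      omega
    rw [hz, hsp, show 2*γ-2*k-1 = (2*γ-2*k-2)+1 from by omega, Nat.factorial_succ]
    have n1 := fact_ne (α:ℕ); have n2 := fact_ne (β:ℕ); have n3 := fact_ne k
    have n4 := fact_ne ((α:ℕ)-k); have n5 := fact_ne ((β:ℕ)-k)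
    have n6 := fact_ne (2*γ-k-1); have n7 := fact_ne (γ-k-1)
    have n8 := fact_ne (2*γ-(α:ℕ)-k-2); have n9 := fact_ne (2*γ-k-(β:ℕ)-2)
    have n10 := fact_ne (2*γ-(α:ℕ)-1); have n11 := fact_ne (2*γ-(β:ℕ)-1)
    have n12 := fact_ne (γ-(α:ℕ)-1); have n13 := fact_ne (γ-(β:ℕ)-1)
    have n14 := fact_ne (2*γ-2*k-2)
    have nh : h ^ ((α:ℕ)-k) ≠ 0 := pow_ne_zero _ hh
    push_cast
    field_simp
  rw [Finset.sum_congr rfl hcongr, ← Finset.mul_sum, hT]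
  simp only [matC]
  rw [show 2*γ-(α:ℕ)-(β:ℕ)-1 = ((2*γ-2-(α:ℕ)-(β:ℕ))+1) from by omega]
  have n1 := fact_ne (α:ℕ); have n2 := fact_ne (β:ℕ)
  have n10 := fact_ne (2*γ-(α:ℕ)-1); have n11 := fact_ne (2*γ-(β:ℕ)-1)
  have n12 := fact_ne (γ-(α:ℕ)-1); have n13 := fact_ne (γ-(β:ℕ)-1)
  have nc : ((2*γ-2-(α:ℕ)-(β:ℕ) : ℕ) : ℝ) + 1 ≠ 0 := by positivity
  push_cast
  field_simp
  ring

lemma ADC (γ : ℕ) (h : ℝ) : matA γ h * matD γ * matC γ h = matB γ h := by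
  ext α β
  rw [Matrix.mul_apply]
  simp only [matA, matD, matC, Matrix.mul_diagonal]
  obtain ⟨n, hn⟩ : ∃ n, γ = (α:ℕ) + n + 1 := ⟨γ - α - 1, by omega⟩
  obtain ⟨m, hm⟩ : ∃ m, γ = (β:ℕ) + m + 1 := ⟨γ - β - 1, by omega⟩
  set F : ℕ → ℝ := fun k =>
    (if (α:ℕ) ≤ k then h ^ (k - (α:ℕ)) / ((k - (α:ℕ)).factorial : ℝ) else 0) *
      (-1:ℝ) ^ (γ - k - 1) *
      (h ^ (2 * γ - k - (β:ℕ) - 1) /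
        (((2 * γ - k - (β:ℕ) - 1) * (γ - k - 1).factorial * (γ - (β:ℕ) - 1).factorial : ℕ) : ℝ))
    with hF
  rw [Fin.sum_univ_eq_sum_range F γ]
  rw [Finset.range_eq_Ico, ← Finset.sum_Ico_consecutive _ (Nat.zero_le (α:ℕ)) (le_of_lt α.isLt)]
  have h0 : ∑ k ∈ Finset.Ico 0 (α:ℕ), F k = 0 := by
    refine Finset.sum_eq_zero fun k hk => ?_
    rw [Finset.mem_Ico] at hk
    simp only [hF]
    rw [if_neg (by omega)]
    ring
  rw [h0, zero_add, Finset.sum_Ico_eq_sum_range,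
    show γ - (α:ℕ) = n + 1 from by omega]
  set G : ℕ → ℝ := fun t => (-1:ℝ)^t / (t.factorial * (n-t).factorial * ((t:ℝ)+m+1)) with hG
  have hg : ∀ j ∈ Finset.range (n+1),
      F ((α:ℕ) + j) = (h^(n+m+1) / (m.factorial : ℝ)) * G (n - j) := by
    intro j hj
    rw [Finset.mem_range] at hj
    obtain ⟨t, ht⟩ : ∃ t, n = j + t := ⟨n - j, by omega⟩
    simp only [hF, hG]
    rw [if_pos (by omega)]
    rw [show (α:ℕ) + j - (α:ℕ) = j from by omega,
      show γ - ((α:ℕ) + j) - 1 = t from by omega,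
      show 2 * γ - ((α:ℕ) + j) - (β:ℕ) - 1 = t + m + 1 from by omega,
      show γ - (β:ℕ) - 1 = m from by omega,
      show n - j = t from by omega,
      show n - t = j from by omega,
      show n + m + 1 = j + (t + m + 1) from by omega,
      pow_add]
    have h1 := fact_ne j; have h2 := fact_ne t; have h3 := fact_ne m
    have h4 : ((t:ℝ)+m+1) ≠ 0 := by positivity
    push_cast
    field_simp
    ring
  rw [Finset.sum_congr rfl hg, ← Finset.mul_sum]
  have hrefl := Finset.sum_range_reflect G (n+1)
  simp only [Nat.add_sub_cancel] at hrefl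
  rw [hrefl]
  simp only [hG]
  rw [beta_sum n m]
  simp only [matB]
  rw [show 2 * γ - (α:ℕ) - (β:ℕ) - 1 = n + m + 1 from by omega]
  have h1 := fact_ne m; have h2 := fact_ne (n+m+1)
  field_simp

lemma odd_sq (γ : ℕ) : ∑ α ∈ Finset.range γ, (2*γ-2*α-1) = γ^2 := by
  rw [Finset.sum_congr rfl (fun α hα => show 2*γ-2*α-1 = 2*(γ-1-α)+1 from by
    rw [Finset.mem_range] at hα; omega)]
  rw [Finset.sum_range_reflect (fun j => 2*j+1) γ]
  induction γ with
  | zero => simp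
  | succ n ih => rw [Finset.sum_range_succ, ih]; ring

lemma gauss (γ : ℕ) : ∑ α ∈ Finset.range γ, (γ-α-1) = γ*(γ-1)/2 := by
  rw [Finset.sum_congr rfl (fun α hα => show γ-α-1 = γ-1-α from by omega)]
  rw [Finset.sum_range_reflect (fun j => j) γ]
  exact Finset.sum_range_id γ

lemma double_fact_prod : ∀ n : ℕ,
    ∏ j ∈ Finset.range n, (((2*j+1).factorial : ℝ) * ((2*j).factorial : ℝ)) =
    ∏ j ∈ Finset.range (2*n), (j.factorial : ℝ) := by
  intro n
  induction n with
  | zero => simp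
  | succ n ih =>
      rw [Finset.prod_range_succ, ih, show 2*(n+1) = (2*n+1)+1 from by ring,
        Finset.prod_range_succ, Finset.prod_range_succ]
      ring

lemma prod_Y (γ : ℕ) :
    ∏ α ∈ Finset.range γ,
      ((α.factorial : ℝ) * (α.factorial : ℝ) * ((2*γ-2*α-1).factorial : ℝ) *
        ((2*γ-2*α-2).factorial : ℝ) /
       (((2*γ-α-1).factorial : ℝ) * ((2*γ-α-1).factorial : ℝ) * ((γ-α-1).factorial : ℝ) *
        ((γ-α-1).factorial : ℝ))) =
    ∏ α ∈ Finset.range γ, ((α.factorial : ℝ) / ((γ+α).factorial : ℝ)) := by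
  have ha : ∏ α ∈ Finset.range γ, (((γ-α-1).factorial : ℝ)) =
      ∏ α ∈ Finset.range γ, ((α.factorial : ℝ)) := by
    rw [Finset.prod_congr rfl (fun α hα => show (((γ-α-1).factorial : ℝ)) = (((γ-1-α).factorial : ℝ)) from by
      rw [show γ-α-1 = γ-1-α from by omega])]
    exact Finset.prod_range_reflect (fun j => ((j.factorial : ℝ))) γ
  have hb : ∏ α ∈ Finset.range γ, (((2*γ-α-1).factorial : ℝ)) =
      ∏ α ∈ Finset.range γ, (((γ+α).factorial : ℝ)) := by
    rw [Finset.prod_congr rfl (fun α hα => show (((2*γ-α-1).factorial : ℝ)) = (((γ+(γ-1-α)).factorial : ℝ)) from by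
      rw [Finset.mem_range] at hα; rw [show 2*γ-α-1 = γ+(γ-1-α) from by omega])]
    exact Finset.prod_range_reflect (fun j => (((γ+j).factorial : ℝ))) γ
  have hc2 : (∏ α ∈ Finset.range γ, (((2*γ-2*α-1).factorial : ℝ))) *
      (∏ α ∈ Finset.range γ, (((2*γ-2*α-2).factorial : ℝ))) =
      (∏ α ∈ Finset.range γ, ((α.factorial : ℝ))) *
      (∏ α ∈ Finset.range γ, (((γ+α).factorial : ℝ))) := by
    rw [← Finset.prod_mul_distrib]
    rw [Finset.prod_congr rfl (fun α hα =>
      show ((2*γ-2*α-1).factorial : ℝ) * ((2*γ-2*α-2).factorial : ℝ) =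
        ((2*(γ-1-α)+1).factorial : ℝ) * ((2*(γ-1-α)).factorial : ℝ) from by
      rw [Finset.mem_range] at hα
      rw [show 2*γ-2*α-1 = 2*(γ-1-α)+1 from by omega, show 2*γ-2*α-2 = 2*(γ-1-α) from by omega])]
    rw [Finset.prod_range_reflect (fun j => (((2*j+1).factorial : ℝ) * ((2*j).factorial : ℝ))) γ]
    rw [double_fact_prod γ, show 2*γ = γ + γ from by ring, Finset.prod_range_add]
  have hP1 : (∏ α ∈ Finset.range γ, ((α.factorial : ℝ))) ≠ 0 :=
    Finset.prod_ne_zero_iff.mpr (fun α _ => fact_ne α)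
  have hP2 : (∏ α ∈ Finset.range γ, (((γ+α).factorial : ℝ))) ≠ 0 :=
    Finset.prod_ne_zero_iff.mpr (fun α _ => fact_ne _)
  rw [Finset.prod_div_distrib]
  simp only [Finset.prod_mul_distrib]
  rw [ha, hb, Finset.prod_div_distrib]
  set p1 := ∏ α ∈ Finset.range γ, ((α.factorial : ℝ)) with hp1
  set p2 := ∏ α ∈ Finset.range γ, (((γ+α).factorial : ℝ)) with hp2
  set pA := ∏ α ∈ Finset.range γ, (((2*γ-2*α-1).factorial : ℝ)) with hpA
  set pB := ∏ α ∈ Finset.range γ, (((2*γ-2*α-2).factorial : ℝ)) with hpB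
  calc p1 * p1 * pA * pB / (p2 * p2 * p1 * p1)
      = (p1 * p1 * (pA * pB)) / (p2 * p2 * p1 * p1) := by ring
    _ = (p1 * p1 * (p1 * p2)) / (p2 * p2 * p1 * p1) := by rw [hc2]
    _ = p1 / p2 := by field_simp

lemma detA (γ : ℕ) (h : ℝ) : (matA γ h).det = 1 := by
  rw [Matrix.det_of_upperTriangular (M := matA γ h)
    (fun i j hij => by simp only [matA]; rw [if_neg (by exact Nat.not_le.mpr hij)])]
  rw [Finset.prod_eq_one]
  intro α _
  simp [matA]

lemma detL (γ : ℕ) (h : ℝ) : (matL γ h).det = 1 := by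
  rw [Matrix.det_of_lowerTriangular (matL γ h)
    (fun i j hij => by simp only [matL]; rw [if_neg (by exact Nat.not_le.mpr hij)])]
  rw [Finset.prod_eq_one]
  intro α _
  simp only [matL]
  rw [if_pos le_rfl, sub_self, zpow_zero, one_mul, Nat.sub_self, Nat.factorial_zero,
    show 2*γ-(α:ℕ)-(α:ℕ)-2 = 2*γ-2*(α:ℕ)-2 from by omega]
  rw [div_eq_one_iff_eq (by push_cast; exact by positivity)]
  push_cast
  ring

lemma detD (γ : ℕ) : (matD γ).det = (-1 : ℝ) ^ (γ * (γ-1) / 2) := by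
  simp only [matD]
  rw [Matrix.det_diagonal, Finset.prod_pow_eq_pow_sum]
  congr 1
  rw [Fin.sum_univ_eq_sum_range (fun α => γ - α - 1) γ]
  exact gauss γ

lemma detU (γ : ℕ) (h : ℝ) :
    (matU γ h).det = h ^ (γ^2) * ∏ α ∈ Finset.range γ, ((α.factorial : ℝ) / ((γ+α).factorial : ℝ)) := by
  rw [Matrix.det_of_upperTriangular (M := matU γ h)
    (fun i j hij => by simp only [matU]; rw [if_neg (by exact Nat.not_le.mpr hij)])]
  have : ∀ α : Fin γ, matU γ h α α =
      h ^ (2*γ-2*(α:ℕ)-1) *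
      (((α:ℕ).factorial : ℝ) * ((α:ℕ).factorial : ℝ) * ((2*γ-2*(α:ℕ)-1).factorial : ℝ) *
        ((2*γ-2*(α:ℕ)-2).factorial : ℝ) /
       (((2*γ-(α:ℕ)-1).factorial : ℝ) * ((2*γ-(α:ℕ)-1).factorial : ℝ) * ((γ-(α:ℕ)-1).factorial : ℝ) *
        ((γ-(α:ℕ)-1).factorial : ℝ))) := by
    intro α
    simp only [matU]
    rw [if_pos le_rfl, Nat.sub_self, Nat.factorial_zero,
      show 2*γ-(α:ℕ)-(α:ℕ)-1 = 2*γ-2*(α:ℕ)-1 from by omega,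
      show 2*γ-(α:ℕ)-(α:ℕ)-2 = 2*γ-2*(α:ℕ)-2 from by omega]
    push_cast
    ring
  rw [Finset.prod_congr rfl (fun α _ => this α)]
  rw [Finset.prod_mul_distrib]
  rw [Fin.prod_univ_eq_prod_range (fun α => h ^ (2*γ-2*α-1)) γ,
    Fin.prod_univ_eq_prod_range (fun α =>
      ((α.factorial : ℝ) * (α.factorial : ℝ) * ((2*γ-2*α-1).factorial : ℝ) *
        ((2*γ-2*α-2).factorial : ℝ) /
       (((2*γ-α-1).factorial : ℝ) * ((2*γ-α-1).factorial : ℝ) * ((γ-α-1).factorial : ℝ) *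
        ((γ-α-1).factorial : ℝ)))) γ]
  rw [Finset.prod_pow_eq_pow_sum, odd_sq, prod_Y]

theorem det_matB (γ : ℕ) (hγ : 1 ≤ γ) (h : ℝ) :
    (matB γ h).det = (-1 : ℝ) ^ (γ * (γ - 1) / 2) * (matC γ h).det ∧
    (matB γ h).det = (-1 : ℝ) ^ (γ * (γ - 1) / 2) * h ^ (γ ^ 2) *
        ∏ α ∈ Finset.range γ, ((α.factorial : ℝ) / ((γ + α).factorial : ℝ)) ∧
    (h ≠ 0 → IsUnit (matB γ h)) := by
  have part1 : (matB γ h).det = (-1:ℝ)^(γ*(γ-1)/2) * (matC γ h).det := by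
    rw [← ADC γ h, Matrix.det_mul, Matrix.det_mul, detA, detD, one_mul]
  have hdetC : (matC γ h).det =
      h ^ (γ^2) * ∏ α ∈ Finset.range γ, ((α.factorial : ℝ)/((γ+α).factorial : ℝ)) := by
    rcases eq_or_ne h 0 with h0 | h0
    · subst h0
      have hC0 : matC γ 0 = 0 := by
        ext α β
        simp only [matC, Matrix.zero_apply]
        rw [zero_pow (show 2*γ-(α:ℕ)-(β:ℕ)-1 ≠ 0 from by
          have := α.isLt; have := β.isLt; omega), zero_div]
      haveI : Nonempty (Fin γ) := ⟨⟨0, hγ⟩⟩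
      rw [hC0, Matrix.det_zero, zero_pow (show γ^2 ≠ 0 from by
        intro H; rw [pow_eq_zero_iff (by norm_num)] at H; omega), zero_mul]
    · rw [← LU γ h h0, Matrix.det_mul, detL, one_mul, detU]
  refine ⟨part1, ?_, ?_⟩
  · rw [part1, hdetC]; ring
  · intro h0
    rw [Matrix.isUnit_iff_isUnit_det, isUnit_iff_ne_zero, part1, hdetC]
    have h1 : ((-1:ℝ))^(γ*(γ-1)/2) ≠ 0 := pow_ne_zero _ (by norm_num)
    have h2 : h ^ (γ^2) ≠ 0 := pow_ne_zero _ h0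
    have h3 : (∏ α ∈ Finset.range γ, ((α.factorial : ℝ)/((γ+α).factorial : ℝ))) ≠ 0 :=
      Finset.prod_ne_zero_iff.mpr (fun α _ => div_ne_zero (fact_ne α) (fact_ne _))
    exact mul_ne_zero h1 (mul_ne_zero h2 h3)
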